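/- Let G be a graph on [n] and π = π_z(G) its encoding. Every decreasing subsequence of π contains entries from the separating runs of at most one vertex: once the subsequence contains an entry of a separating run of a vertex v, all subsequent entries of the subsequence belong to the left or right separating run of v. -/

import Mathlib

open scoped Classical

noncomputable section

/-- Number of right-neighbours of `v` (neighbours `u` with `v < u ≤ n`). -/
def degPlus (n : ℕ) (E : ℕ → ℕ → Prop) (v : ℕ) : ℕ :=
  ((Finset.Icc (v + 1) n).filter (fun u => E v u)).card

/-- Number of left-neighbours of `v` (neighbours `u` with `1 ≤ u < v`). -/
def degMinus (n : ℕ) (E : ℕ → ℕ → Prop) (v : ℕ) : ℕ :=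
  ((Finset.Icc 1 (v - 1)).filter (fun u => E v u)).card

/-- The number of edges of the graph with vertex set `[1, n]` and adjacency `E`. -/
def edgeCount (n : ℕ) (E : ℕ → ℕ → Prop) : ℕ :=
  (((Finset.Icc 1 n) ×ˢ (Finset.Icc 1 n)).filter (fun p => p.1 < p.2 ∧ E p.1 p.2)).card

/-- Starting position of the left separating run of `v`. -/
def pL (n z : ℕ) (E : ℕ → ℕ → Prop) (v : ℕ) : ℕ :=
  1 + ∑ w ∈ Finset.Ico 1 v, (2 * z + degPlus n E w)

/-- Starting position of the encoding entries of `v`. -/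
def pM (n z : ℕ) (E : ℕ → ℕ → Prop) (v : ℕ) : ℕ := pL n z E v + z

/-- Starting position of the right separating run of `v`. -/
def pR (n z : ℕ) (E : ℕ → ℕ → Prop) (v : ℕ) : ℕ := pM n z E v + degPlus n E v

/-- Starting (largest) value of the right separating run of `v`. -/
def qR (n z : ℕ) (E : ℕ → ℕ → Prop) (v : ℕ) : ℕ :=
  z + ∑ w ∈ Finset.Ico 1 v, (2 * z + degMinus n E w)

/-- Least value reserved for the encoding entries pointing to `v`. -/
def qM (n z : ℕ) (E : ℕ → ℕ → Prop) (v : ℕ) : ℕ := qR n z E v + 1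

/-- Starting (largest) value of the left separating run of `v`. -/
def qL (n z : ℕ) (E : ℕ → ℕ → Prop) (v : ℕ) : ℕ := qR n z E v + z + degMinus n E v

/-- `ℓ(v, u) = |{w < v : {w, u} ∈ E}|`. -/
def ellE (E : ℕ → ℕ → Prop) (v u : ℕ) : ℕ :=
  ((Finset.Ico 1 v).filter (fun w => E w u)).card

/-- The sorted list of right-neighbours of `v`. -/
def nbrList (n : ℕ) (E : ℕ → ℕ → Prop) (v : ℕ) : List ℕ :=
  Finset.sort ((Finset.Icc (v + 1) n).filter (fun u => E v u)) (· ≤ ·)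

/-- The encoding permutation `π_z(G)` of the paper, as a function on positions
(acting on `[1, 2zn + |E(G)|]`): for each vertex `v` (in order) it consists of a
decreasing run of length `z` starting with value `qL v`, then one encoding entry
`qM u + ℓ(v, u)` for each right-neighbour `u` of `v` in increasing order, then a
decreasing run of length `z` starting with value `qR v`. -/
def enc (n z : ℕ) (E : ℕ → ℕ → Prop) (i : ℕ) : ℕ :=
  if h1 : ∃ v, v ∈ Finset.Icc 1 n ∧ pL n z E v ≤ i ∧ i < pM n z E v then
    qL n z E h1.choose - (i - pL n z E h1.choose)
  else if h2 : ∃ v, v ∈ Finset.Icc 1 n ∧ pR n z E v ≤ i ∧ i < pR n z E v + z then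
    qR n z E h2.choose - (i - pR n z E h2.choose)
  else if h3 : ∃ v, v ∈ Finset.Icc 1 n ∧ pM n z E v ≤ i ∧ i < pR n z E v then
    (fun v => (fun u => qM n z E u + ellE E v u)
      ((nbrList n E v).getD (i - pM n z E v) 0)) h3.choose
  else 0

/-- `i` lies in the left or right separating run of the vertex `v`. -/
def inRunOf (n z : ℕ) (E : ℕ → ℕ → Prop) (v i : ℕ) : Prop :=
  (pL n z E v ≤ i ∧ i < pL n z E v + z) ∨ (pR n z E v ≤ i ∧ i < pR n z E v + z)

/-- `i` lies in some separating run. -/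
def inSepRun (n z : ℕ) (E : ℕ → ℕ → Prop) (i : ℕ) : Prop :=
  ∃ v, v ∈ Finset.Icc 1 n ∧ inRunOf n z E v i

/-- `σ`, a bijection of `[1, l]`, is a pattern of `π`, a bijection of `[1, m]`:
there is a strictly increasing `φ : [1, l] → [1, m]` with
`σ x < σ y ↔ π (φ x) < π (φ y)`. -/
def IsPatternOn (σ : ℕ → ℕ) (l : ℕ) (π : ℕ → ℕ) (m : ℕ) : Prop :=
  ∃ φ : ℕ → ℕ, Set.MapsTo φ (Set.Icc 1 l) (Set.Icc 1 m) ∧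
    StrictMonoOn φ (Set.Icc 1 l) ∧
    ∀ x ∈ Set.Icc 1 l, ∀ y ∈ Set.Icc 1 l, (σ x < σ y ↔ π (φ x) < π (φ y))

end


section Aux

variable (n z : ℕ) (E : ℕ → ℕ → Prop)

lemma pL_mono : Monotone (pL n z E) := fun u v h => by
  unfold pL
  exact Nat.add_le_add_left
    (Finset.sum_le_sum_of_subset (Finset.Ico_subset_Ico le_rfl h)) 1

lemma qR_mono : Monotone (qR n z E) := fun u v h => by
  unfold qR
  exact Nat.add_le_add_left
    (Finset.sum_le_sum_of_subset (Finset.Ico_subset_Ico le_rfl h)) z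

lemma pL_succ {v : ℕ} (hv : 1 ≤ v) :
    pL n z E (v + 1) = pL n z E v + (2 * z + degPlus n E v) := by
  unfold pL; rw [Finset.sum_Ico_succ_top hv, add_assoc]

lemma qR_succ {v : ℕ} (hv : 1 ≤ v) :
    qR n z E (v + 1) = qR n z E v + (2 * z + degMinus n E v) := by
  unfold qR; rw [Finset.sum_Ico_succ_top hv, add_assoc]

lemma pM_def (v : ℕ) : pM n z E v = pL n z E v + z := rfl
lemma pR_def (v : ℕ) : pR n z E v = pL n z E v + z + degPlus n E v := rfl
lemma qL_def (v : ℕ) : qL n z E v = qR n z E v + z + degMinus n E v := rfl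
lemma qM_def (v : ℕ) : qM n z E v = qR n z E v + 1 := rfl

lemma block_lt {u v : ℕ} (hu : 1 ≤ u) (huv : u < v) :
    pR n z E u + z ≤ pL n z E v := by
  have h1 := pL_succ n z E hu
  have h2 := pL_mono n z E (show u + 1 ≤ v from huv)
  have h3 := pR_def n z E u
  omega

lemma enc_left {v i : ℕ} (hv : v ∈ Finset.Icc 1 n)
    (h1 : pL n z E v ≤ i) (h2 : i < pM n z E v) :
    enc n z E i = qL n z E v - (i - pL n z E v) := by
  have hv' := Finset.mem_Icc.mp hv
  have hex : ∃ w, w ∈ Finset.Icc 1 n ∧ pL n z E w ≤ i ∧ i < pM n z E w := ⟨v, hv, h1, h2⟩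
  have hkey : hex.choose = v := by
    obtain ⟨hw, hw1, hw2⟩ := hex.choose_spec
    have hw' := Finset.mem_Icc.mp hw
    by_contra hne
    have hMw := pM_def n z E hex.choose
    have hMv := pM_def n z E v
    rcases Nat.lt_or_ge hex.choose v with h | h
    · have hb := block_lt n z E hw'.1 h
      have := pR_def n z E hex.choose
      omega
    · have hlt : v < hex.choose := lt_of_le_of_ne h (Ne.symm hne)
      have hb := block_lt n z E hv'.1 hlt
      have := pR_def n z E v
      omega
  unfold enc
  rw [dif_pos hex, hkey]

lemma enc_right {v i : ℕ} (hv : v ∈ Finset.Icc 1 n)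
    (h1 : pR n z E v ≤ i) (h2 : i < pR n z E v + z) :
    enc n z E i = qR n z E v - (i - pR n z E v) := by
  have hv' := Finset.mem_Icc.mp hv
  have hRv := pR_def n z E v
  have hnot1 : ¬ ∃ w, w ∈ Finset.Icc 1 n ∧ pL n z E w ≤ i ∧ i < pM n z E w := by
    rintro ⟨w, hw, hw1, hw2⟩
    have hw' := Finset.mem_Icc.mp hw
    have hMw := pM_def n z E w
    rcases le_or_gt w v with h | h
    · have := pL_mono n z E h
      omega
    · have hb := block_lt n z E hv'.1 h
      omega
  have hex : ∃ w, w ∈ Finset.Icc 1 n ∧ pR n z E w ≤ i ∧ i < pR n z E w + z := ⟨v, hv, h1, h2⟩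
  have hkey : hex.choose = v := by
    obtain ⟨hw, hw1, hw2⟩ := hex.choose_spec
    have hw' := Finset.mem_Icc.mp hw
    by_contra hne
    have hRw := pR_def n z E hex.choose
    rcases Nat.lt_or_ge hex.choose v with h | h
    · have hb := block_lt n z E hw'.1 h
      omega
    · have hlt : v < hex.choose := lt_of_le_of_ne h (Ne.symm hne)
      have hb := block_lt n z E hv'.1 hlt
      omega
  unfold enc
  rw [dif_neg hnot1, dif_pos hex, hkey]

lemma enc_mid {v i : ℕ} (hv : v ∈ Finset.Icc 1 n)
    (h1 : pM n z E v ≤ i) (h2 : i < pR n z E v) :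
    enc n z E i = qM n z E ((nbrList n E v).getD (i - pM n z E v) 0)
      + ellE E v ((nbrList n E v).getD (i - pM n z E v) 0) := by
  have hv' := Finset.mem_Icc.mp hv
  have hRv := pR_def n z E v
  have hMv := pM_def n z E v
  have hnot1 : ¬ ∃ w, w ∈ Finset.Icc 1 n ∧ pL n z E w ≤ i ∧ i < pM n z E w := by
    rintro ⟨w, hw, hw1, hw2⟩
    have hw' := Finset.mem_Icc.mp hw
    have hMw := pM_def n z E w
    rcases le_or_gt w v with h | h
    · have := pL_mono n z E h
      omega
    · have hb := block_lt n z E hv'.1 h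
      omega
  have hnot2 : ¬ ∃ w, w ∈ Finset.Icc 1 n ∧ pR n z E w ≤ i ∧ i < pR n z E w + z := by
    rintro ⟨w, hw, hw1, hw2⟩
    have hw' := Finset.mem_Icc.mp hw
    have hRw := pR_def n z E w
    rcases Nat.lt_or_ge w v with h | h
    · have hb := block_lt n z E hw'.1 h
      omega
    · rcases Nat.eq_or_lt_of_le h with h' | h'
      · subst h'; omega
      · have hs := pL_succ n z E hv'.1
        have := pL_mono n z E (show v + 1 ≤ w from h')
        omega
  have hex : ∃ w, w ∈ Finset.Icc 1 n ∧ pM n z E w ≤ i ∧ i < pR n z E w := ⟨v, hv, h1, h2⟩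
  have hkey : hex.choose = v := by
    obtain ⟨hw, hw1, hw2⟩ := hex.choose_spec
    have hw' := Finset.mem_Icc.mp hw
    by_contra hne
    have hRw := pR_def n z E hex.choose
    have hMw := pM_def n z E hex.choose
    rcases Nat.lt_or_ge hex.choose v with h | h
    · have hs := pL_succ n z E hw'.1
      have := pL_mono n z E (show hex.choose + 1 ≤ v from h)
      omega
    · have hlt : v < hex.choose := lt_of_le_of_ne h (Ne.symm hne)
      have hs := pL_succ n z E hv'.1
      have := pL_mono n z E (show v + 1 ≤ hex.choose from hlt)
      omega
  unfold enc
  rw [dif_neg hnot1, dif_neg hnot2, dif_pos hex, hkey]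

lemma exists_block {j : ℕ} (hn : 1 ≤ n) (hj1 : 1 ≤ j) (hj2 : j < pL n z E (n + 1)) :
    ∃ u, u ∈ Finset.Icc 1 n ∧ pL n z E u ≤ j ∧ j < pL n z E (u + 1) := by
  have hpL1 : pL n z E 1 = 1 := by unfold pL; simp
  classical
  set s := (Finset.Icc 1 n).filter (fun u => pL n z E u ≤ j) with hs
  have h1s : (1 : ℕ) ∈ s :=
    Finset.mem_filter.mpr ⟨Finset.mem_Icc.mpr ⟨le_rfl, hn⟩, by omega⟩
  have hne : s.Nonempty := ⟨1, h1s⟩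
  have hmem := Finset.mem_filter.mp (s.max'_mem hne)
  have hIc := Finset.mem_Icc.mp hmem.1
  refine ⟨s.max' hne, hmem.1, hmem.2, ?_⟩
  by_contra hcon
  push_neg at hcon
  rcases Nat.eq_or_lt_of_le hIc.2 with h | h
  · rw [h] at hcon; omega
  · have hmm : s.max' hne + 1 ∈ s :=
      Finset.mem_filter.mpr ⟨Finset.mem_Icc.mpr ⟨by omega, by omega⟩, hcon⟩
    have := Finset.le_max' s _ hmm
    omega

lemma sum_degPlus : ∑ w ∈ Finset.Ico 1 (n + 1), degPlus n E w = edgeCount n E := by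
  rw [Finset.Ico_add_one_right_eq_Icc]
  unfold edgeCount
  rw [Finset.card_eq_sum_card_fiberwise
    (f := Prod.fst) (t := Finset.Icc 1 n)
    (fun p hp => (Finset.mem_product.mp (Finset.mem_filter.mp hp).1).1)]
  apply Finset.sum_congr rfl
  intro w hw
  have hw' := Finset.mem_Icc.mp hw
  unfold degPlus
  apply Finset.card_bij (fun u _ => ((w, u) : ℕ × ℕ))
  · intro u hu
    simp only [Finset.mem_filter, Finset.mem_Icc] at hu
    simp only [Finset.mem_filter, Finset.mem_product, Finset.mem_Icc]
    exact ⟨⟨⟨⟨hw'.1, hw'.2⟩, ⟨by omega, hu.1.2⟩⟩, by omega, hu.2⟩, trivial⟩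
  · intro u1 h1 u2 h2 h
    simpa using h
  · intro p hp
    simp only [Finset.mem_filter, Finset.mem_product, Finset.mem_Icc] at hp
    obtain ⟨⟨⟨⟨h11, h12⟩, h21, h22⟩, hlt, hE⟩, hfst⟩ := hp
    refine ⟨p.2, ?_, ?_⟩
    · simp only [Finset.mem_filter, Finset.mem_Icc]
      refine ⟨⟨by omega, h22⟩, ?_⟩
      rw [← hfst]; exact hE
    · rw [← hfst]

lemma pL_top : pL n z E (n + 1) = 2 * z * n + edgeCount n E + 1 := by
  have h := sum_degPlus n E
  unfold pL
  have hcard : n + 1 - 1 = n := by omega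
  rw [Finset.sum_add_distrib, h, Finset.sum_const, Nat.card_Ico, hcard, smul_eq_mul]
  ring

end Aux

/-- Every decreasing subsequence of `enc n z E` contains separating-run entries of at most
one vertex: once it contains an entry of a separating run of `v`, all subsequent entries
lie in the left or right separating run of `v`. -/
theorem decreasing_subseq_single_sep_vertex (n z : ℕ) (E : ℕ → ℕ → Prop)
    (hsym : ∀ u v, E u v → E v u)
    (hrange : ∀ u v, E u v → u ∈ Finset.Icc 1 n ∧ v ∈ Finset.Icc 1 n)
    (hirr : ∀ v, ¬ E v v)
    (k : ℕ) (φ : Fin k → ℕ) (hφ : StrictMono φ)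
    (hin : ∀ x, φ x ∈ Set.Icc 1 (2 * z * n + edgeCount n E))
    (hdec : StrictAnti (fun x => enc n z E (φ x)))
    (v : ℕ) (hv : v ∈ Finset.Icc 1 n)
    (a : Fin k) (ha : inRunOf n z E v (φ a)) :
    ∀ b : Fin k, a ≤ b → inRunOf n z E v (φ b) := by
  have hv' := Finset.mem_Icc.mp hv
  rcases Nat.eq_zero_or_pos z with hz | hz
  · subst hz; exfalso; unfold inRunOf at ha; omega
  intro b hab
  rcases eq_or_lt_of_le hab with heq | hlt
  · rw [← heq]; exact ha
  have hij : φ a < φ b := hφ hlt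
  have hde : enc n z E (φ b) < enc n z E (φ a) := hdec hlt
  have hRv := pR_def n z E v
  have hMv := pM_def n z E v
  have hQv := qL_def n z E v
  have hQsv := qR_succ n z E hv'.1
  have hia : pL n z E v ≤ φ a := by
    unfold inRunOf at ha; omega
  have hval : enc n z E (φ a) ≤ qL n z E v := by
    rcases ha with ⟨h1, h2⟩ | ⟨h1, h2⟩
    · rw [enc_left n z E hv h1 (by omega)]; omega
    · rw [enc_right n z E hv h1 h2]; omega
  obtain ⟨hb1, hb2⟩ := Set.mem_Icc.mp (hin b)
  have htop := pL_top n z E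
  obtain ⟨hu, hu', hu1, hu2⟩ := exists_block n z E (le_trans hv'.1 hv'.2) hb1
    (show φ b < pL n z E (n + 1) by omega)
  obtain ⟨hul, hun⟩ := Finset.mem_Icc.mp hu'
  have hsu := pL_succ n z E hul
  have hRu := pR_def n z E hu
  have hMu := pM_def n z E hu
  have hQu := qL_def n z E hu
  have hvu : v ≤ hu := by
    by_contra h
    have := block_lt n z E hul (show hu < v by omega)
    omega
  have hqm : qR n z E (v + 1) ≤ qR n z E (hu + 1) := qR_mono n z E (by omega)
  have hQsu := qR_succ n z E hul
  rcases Nat.lt_or_ge (φ b) (pM n z E hu) with hc1 | hc1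
  · -- left separating run of hu
    have he := enc_left n z E hu' hu1 hc1
    rcases Nat.eq_or_lt_of_le hvu with h | h
    · subst h
      exact Or.inl ⟨hu1, by omega⟩
    · exfalso
      have := qR_mono n z E (show v + 1 ≤ hu from h)
      omega
  rcases Nat.lt_or_ge (φ b) (pR n z E hu) with hc2 | hc2
  · -- encoding entries of hu : impossible
    exfalso
    have he := enc_mid n z E hu' hc1 hc2
    set u' := (nbrList n E hu).getD (φ b - pM n z E hu) 0 with hu'def
    have hlen : (nbrList n E hu).length = degPlus n E hu := Finset.length_sort _
    have hidx : φ b - pM n z E hu < (nbrList n E hu).length := by omega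
    have hmem : u' ∈ nbrList n E hu := by
      rw [hu'def, List.getD_eq_getElem _ _ hidx]
      exact List.getElem_mem _
    rw [nbrList, Finset.mem_sort, Finset.mem_filter, Finset.mem_Icc] at hmem
    have hq1 : qR n z E (hu + 1) ≤ qR n z E u' := qR_mono n z E hmem.1.1
    have hqMu' := qM_def n z E u'
    omega
  · -- right separating run of hu
    have hc3 : φ b < pR n z E hu + z := by omega
    have he := enc_right n z E hu' hc2 hc3
    rcases Nat.eq_or_lt_of_le hvu with h | h
    · subst h
      exact Or.inr ⟨hc2, hc3⟩
    · exfalso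
      have := qR_mono n z E (show v + 1 ≤ hu from h)
      omega
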